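/- arXiv:2007.00102 — 2 statements merged into one kernel-verified Lean document; each statement's English description precedes it below -/
import Mathlib

section
/- For any POMDP with value function V on beliefs (the supremum over all policies of the probability to reach the bad beliefs in the belief MDP), V is convex: for all beliefs b₁, b₂ supported on states with the same observation and all α ∈ [0,1], V(α·b₁ + (1−α)·b₂) ≤ α·V(b₁) + (1−α)·V(b₂). -/
open BigOperators
open scoped Classical

/-- A POMDP: an MDP with finite state, action and observation spaces,
    a transition function `P` with `∑ s', P s a s' ∈ {0,1}`,
    an observation function `O` and an initial state. -/
structure POMDP (S A Z : Type) [Fintype S] [Fintype A] [Fintype Z] where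
  P : S → A → S → ℝ
  P_nonneg : ∀ s a s', 0 ≤ P s a s'
  P_sum : ∀ s a, (∑ s', P s a s') = 0 ∨ (∑ s', P s a s') = 1
  O : S → Z
  init : S

variable {S A Z : Type} [Fintype S] [Fintype A] [Fintype Z]

/-- A probability distribution over the (finite) state space. -/
def IsDist (b : S → ℝ) : Prop := (∀ s, 0 ≤ b s) ∧ ∑ s, b s = 1

/-- A belief: a distribution whose support is contained in one observation class. -/
def IsBelief (M : POMDP S A Z) (b : S → ℝ) : Prop :=
  IsDist b ∧ ∀ s s', b s ≠ 0 → b s' ≠ 0 → M.O s = M.O s'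

/-- The Dirac distribution on a state. -/
noncomputable def dirac (s : S) : S → ℝ := fun t => if t = s then 1 else 0

/-- `P(b,α,z)`: the probability of observing `z` after taking `α` in belief `b`. -/
noncomputable def obsProb (M : POMDP S A Z) (b : S → ℝ) (a : A) (z : Z) : ℝ :=
  ∑ s, b s * ∑ s', (if M.O s' = z then M.P s a s' else 0)

/-- `⟦b|α,z⟧`: the Bayesian belief update after taking `α` and observing `z`. -/
noncomputable def beliefUpdate (M : POMDP S A Z) (b : S → ℝ) (a : A) (z : Z) : S → ℝ :=
  fun s' => (if M.O s' = z then ∑ s, b s * M.P s a s' else 0) / obsProb M b a z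

/-- Bad beliefs: beliefs assigning total probability 1 to the bad states. -/
def IsBadBelief (Bad : Finset S) (b : S → ℝ) : Prop := ∑ s ∈ Bad, b s = 1

/-- Transition probabilities of the belief MDP. -/
noncomputable def beliefTrans (M : POMDP S A Z) (b : S → ℝ) (a : A) (b' : S → ℝ) : ℝ :=
  ∑ z, if b' = beliefUpdate M b a z ∧ 0 < obsProb M b a z then obsProb M b a z else 0

/-- `n`-step value iteration for reaching the bad beliefs in the belief MDP. -/
noncomputable def valN (M : POMDP S A Z) (Bad : Finset S) : ℕ → (S → ℝ) → ℝ
  | 0, b => if IsBadBelief Bad b then 1 else 0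
  | n+1, b =>
      if IsBadBelief Bad b then 1
      else ⨆ a : A, ∑ z, obsProb M b a z * valN M Bad n (beliefUpdate M b a z)

/-- The value of a belief: the optimal probability of reaching the bad beliefs
    in the belief MDP (limit of value iteration). -/
noncomputable def beliefVal (M : POMDP S A Z) (Bad : Finset S) (b : S → ℝ) : ℝ :=
  ⨆ n, valN M Bad n b
section Aux

variable {S A Z : Type} [Fintype S] [Fintype A] [Fintype Z]

/-- The (unnormalized) numerator of the belief update. -/
noncomputable def numer (M : POMDP S A Z) (b : S → ℝ) (a : A) (z : Z) (s' : S) : ℝ :=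
  if M.O s' = z then ∑ s, b s * M.P s a s' else 0

lemma beliefUpdate_eq (M : POMDP S A Z) (b : S → ℝ) (a : A) (z : Z) (s' : S) :
    beliefUpdate M b a z s' = numer M b a z s' / obsProb M b a z := rfl

lemma obsProb_eq (M : POMDP S A Z) (b : S → ℝ) (a : A) (z : Z) :
    obsProb M b a z = ∑ s', numer M b a z s' := by
  unfold obsProb numer
  simp only [Finset.mul_sum, mul_ite, mul_zero]
  rw [Finset.sum_comm]
  refine Finset.sum_congr rfl fun s' _ => ?_
  by_cases h : M.O s' = z <;> simp [h]

lemma numer_nonneg (M : POMDP S A Z) {b : S → ℝ} (hb : ∀ s, 0 ≤ b s) (a : A) (z : Z) (s' : S) :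
    0 ≤ numer M b a z s' := by
  unfold numer
  split
  · exact Finset.sum_nonneg fun s _ => mul_nonneg (hb s) (M.P_nonneg s a s')
  · exact le_refl 0

lemma obsProb_nonneg (M : POMDP S A Z) {b : S → ℝ} (hb : ∀ s, 0 ≤ b s) (a : A) (z : Z) :
    0 ≤ obsProb M b a z := by
  rw [obsProb_eq]
  exact Finset.sum_nonneg fun s' _ => numer_nonneg M hb a z s'

lemma numer_eq_zero (M : POMDP S A Z) {b : S → ℝ} (hb : ∀ s, 0 ≤ b s) {a : A} {z : Z}
    (h : obsProb M b a z = 0) (s' : S) : numer M b a z s' = 0 := by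
  rw [obsProb_eq] at h
  exact (Finset.sum_eq_zero_iff_of_nonneg (fun t _ => numer_nonneg M hb a z t)).1 h s'
    (Finset.mem_univ s')

lemma beliefUpdate_nonneg (M : POMDP S A Z) {b : S → ℝ} (hb : ∀ s, 0 ≤ b s) (a : A) (z : Z)
    (s' : S) : 0 ≤ beliefUpdate M b a z s' := by
  rw [beliefUpdate_eq]
  exact div_nonneg (numer_nonneg M hb a z s') (obsProb_nonneg M hb a z)

lemma sum_beliefUpdate (M : POMDP S A Z) (b : S → ℝ) (a : A) (z : Z)
    (h : obsProb M b a z ≠ 0) : ∑ s', beliefUpdate M b a z s' = 1 := by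
  simp only [beliefUpdate_eq]
  rw [← Finset.sum_div, ← obsProb_eq, div_self h]

lemma sum_beliefUpdate_le_one (M : POMDP S A Z) {b : S → ℝ} (hb : ∀ s, 0 ≤ b s) (a : A) (z : Z) :
    ∑ s', beliefUpdate M b a z s' ≤ 1 := by
  by_cases h : obsProb M b a z = 0
  · have : ∀ s', beliefUpdate M b a z s' = 0 := by
      intro s'
      rw [beliefUpdate_eq, numer_eq_zero M hb h s', zero_div]
    simp [this]
  · rw [sum_beliefUpdate M b a z h]

lemma beliefUpdate_obs (M : POMDP S A Z) (b : S → ℝ) (a : A) (z : Z) (s' : S)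
    (h : beliefUpdate M b a z s' ≠ 0) : M.O s' = z := by
  by_contra hO
  apply h
  rw [beliefUpdate_eq]
  unfold numer
  rw [if_neg hO, zero_div]

lemma isBelief_beliefUpdate (M : POMDP S A Z) {b : S → ℝ} (hb : ∀ s, 0 ≤ b s) (a : A) (z : Z)
    (h : obsProb M b a z ≠ 0) : IsBelief M (beliefUpdate M b a z) := by
  refine ⟨⟨beliefUpdate_nonneg M hb a z, sum_beliefUpdate M b a z h⟩, fun s s' hs hs' => ?_⟩
  rw [beliefUpdate_obs M b a z s hs, beliefUpdate_obs M b a z s' hs']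

lemma obsProb_mix (M : POMDP S A Z) (b₁ b₂ : S → ℝ) (α : ℝ) (a : A) (z : Z) :
    obsProb M (fun s => α * b₁ s + (1 - α) * b₂ s) a z
      = α * obsProb M b₁ a z + (1 - α) * obsProb M b₂ a z := by
  unfold obsProb
  rw [Finset.mul_sum, Finset.mul_sum, ← Finset.sum_add_distrib]
  refine Finset.sum_congr rfl fun s _ => ?_
  ring

lemma numer_mix (M : POMDP S A Z) (b₁ b₂ : S → ℝ) (α : ℝ) (a : A) (z : Z) (s' : S) :
    numer M (fun s => α * b₁ s + (1 - α) * b₂ s) a z s'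
      = α * numer M b₁ a z s' + (1 - α) * numer M b₂ a z s' := by
  unfold numer
  by_cases h : M.O s' = z <;> simp [h, Finset.mul_sum, ← Finset.sum_add_distrib]
  refine Finset.sum_congr rfl fun s _ => ?_
  ring

lemma sum_obsProb_le_one (M : POMDP S A Z) {b : S → ℝ} (hb0 : ∀ s, 0 ≤ b s)
    (hb1 : ∑ s, b s ≤ 1) (a : A) : ∑ z, obsProb M b a z ≤ 1 := by
  unfold obsProb
  rw [Finset.sum_comm]
  have key : ∀ s, ∑ z, b s * ∑ s', (if M.O s' = z then M.P s a s' else 0) ≤ b s := by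
    intro s
    rw [← Finset.mul_sum, Finset.sum_comm]
    have h2 : ∑ s', ∑ z, (if M.O s' = z then M.P s a s' else 0) = ∑ s', M.P s a s' := by
      refine Finset.sum_congr rfl fun s' _ => ?_
      simp
    rw [h2]
    rcases M.P_sum s a with h | h
    · rw [h, mul_zero]; exact hb0 s
    · rw [h, mul_one]
  calc (∑ s, ∑ z, b s * ∑ s', (if M.O s' = z then M.P s a s' else 0))
      ≤ ∑ s, b s := Finset.sum_le_sum fun s _ => key s
    _ ≤ 1 := hb1

lemma valN_nonneg (M : POMDP S A Z) (Bad : Finset S) :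
    ∀ (n : ℕ) (b : S → ℝ), (∀ s, 0 ≤ b s) → 0 ≤ valN M Bad n b
  | 0, b, hb => by
      unfold valN; split <;> norm_num
  | n+1, b, hb => by
      unfold valN; split
      · norm_num
      · exact Real.iSup_nonneg fun a => Finset.sum_nonneg fun z _ =>
          mul_nonneg (obsProb_nonneg M hb a z)
            (valN_nonneg M Bad n _ (beliefUpdate_nonneg M hb a z))

lemma inner_le_one (M : POMDP S A Z) (Bad : Finset S) (n : ℕ) {b : S → ℝ}
    (hb0 : ∀ s, 0 ≤ b s) (hb1 : ∑ s, b s ≤ 1) (a : A)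
    (hval : ∀ c : S → ℝ, (∀ s, 0 ≤ c s) → (∑ s, c s ≤ 1) → valN M Bad n c ≤ 1) :
    ∑ z, obsProb M b a z * valN M Bad n (beliefUpdate M b a z) ≤ 1 := by
  calc (∑ z, obsProb M b a z * valN M Bad n (beliefUpdate M b a z))
      ≤ ∑ z, obsProb M b a z * 1 := by
        refine Finset.sum_le_sum fun z _ => ?_
        exact mul_le_mul_of_nonneg_left
          (hval _ (beliefUpdate_nonneg M hb0 a z) (sum_beliefUpdate_le_one M hb0 a z))
          (obsProb_nonneg M hb0 a z)
    _ = ∑ z, obsProb M b a z := by simp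
    _ ≤ 1 := sum_obsProb_le_one M hb0 hb1 a

lemma valN_le_one (M : POMDP S A Z) (Bad : Finset S) :
    ∀ (n : ℕ) (b : S → ℝ), (∀ s, 0 ≤ b s) → (∑ s, b s ≤ 1) → valN M Bad n b ≤ 1
  | 0, b, hb0, hb1 => by
      unfold valN; split <;> norm_num
  | n+1, b, hb0, hb1 => by
      unfold valN; split
      · norm_num
      · exact Real.iSup_le
          (fun a => inner_le_one M Bad n hb0 hb1 a (fun c hc0 hc1 => valN_le_one M Bad n c hc0 hc1))
          zero_le_one

lemma inner_le_valN_succ (M : POMDP S A Z) (Bad : Finset S) (n : ℕ) {b : S → ℝ}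
    (hb : IsDist b) (a : A) :
    ∑ z, obsProb M b a z * valN M Bad n (beliefUpdate M b a z) ≤ valN M Bad (n+1) b := by
  have h1 : ∀ a' : A, ∑ z, obsProb M b a' z * valN M Bad n (beliefUpdate M b a' z) ≤ 1 :=
    fun a' => inner_le_one M Bad n hb.1 (le_of_eq hb.2) a'
      (fun c hc0 hc1 => valN_le_one M Bad n c hc0 hc1)
  rw [show valN M Bad (n+1) b = if IsBadBelief Bad b then 1
      else ⨆ a : A, ∑ z, obsProb M b a z * valN M Bad n (beliefUpdate M b a z) from rfl]
  split
  · exact h1 a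
  · have hbdd : BddAbove (Set.range fun a' : A =>
        ∑ z, obsProb M b a' z * valN M Bad n (beliefUpdate M b a' z)) :=
      ⟨1, by rintro x ⟨a', rfl⟩; exact h1 a'⟩
    exact le_ciSup hbdd a

lemma isBadBelief_mix {Bad : Finset S} {b₁ b₂ : S → ℝ} (h₁ : IsDist b₁) (h₂ : IsDist b₂)
    {α : ℝ} (hα0 : 0 < α) (hα1 : α < 1)
    (h : IsBadBelief Bad (fun s => α * b₁ s + (1 - α) * b₂ s)) :
    IsBadBelief Bad b₁ ∧ IsBadBelief Bad b₂ := by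
  unfold IsBadBelief at *
  have e : ∑ s ∈ Bad, (α * b₁ s + (1 - α) * b₂ s)
      = α * ∑ s ∈ Bad, b₁ s + (1 - α) * ∑ s ∈ Bad, b₂ s := by
    rw [Finset.mul_sum, Finset.mul_sum, ← Finset.sum_add_distrib]
  rw [e] at h
  have l1 : ∑ s ∈ Bad, b₁ s ≤ 1 := by
    rw [← h₁.2]
    exact Finset.sum_le_sum_of_subset_of_nonneg (Finset.subset_univ _) (fun s _ _ => h₁.1 s)
  have l2 : ∑ s ∈ Bad, b₂ s ≤ 1 := by
    rw [← h₂.2]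
    exact Finset.sum_le_sum_of_subset_of_nonneg (Finset.subset_univ _) (fun s _ _ => h₂.1 s)
  constructor <;> nlinarith

end Aux
section Aux2

variable {S A Z : Type} [Fintype S] [Fintype A] [Fintype Z]

lemma step_key (M : POMDP S A Z) (Bad : Finset S) (n : ℕ)
    (b₁ b₂ : S → ℝ) (h₁ : IsBelief M b₁) (h₂ : IsBelief M b₂)
    (IH : ∀ c₁ c₂ : S → ℝ, IsBelief M c₁ → IsBelief M c₂ →
      (∀ s s', c₁ s ≠ 0 → c₂ s' ≠ 0 → M.O s = M.O s') →
      ∀ β : ℝ, 0 ≤ β → β ≤ 1 →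
      valN M Bad n (fun s => β * c₁ s + (1 - β) * c₂ s)
        ≤ β * valN M Bad n c₁ + (1 - β) * valN M Bad n c₂)
    {α : ℝ} (hα0 : 0 < α) (hα1 : α < 1) (a : A) (z : Z) :
    obsProb M (fun s => α * b₁ s + (1 - α) * b₂ s) a z *
      valN M Bad n (beliefUpdate M (fun s => α * b₁ s + (1 - α) * b₂ s) a z)
    ≤ α * (obsProb M b₁ a z * valN M Bad n (beliefUpdate M b₁ a z))
      + (1 - α) * (obsProb M b₂ a z * valN M Bad n (beliefUpdate M b₂ a z)) := by
  have hD₁0 : 0 ≤ obsProb M b₁ a z := obsProb_nonneg M h₁.1.1 a z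
  have hD₂0 : 0 ≤ obsProb M b₂ a z := obsProb_nonneg M h₂.1.1 a z
  have hDmix : obsProb M (fun s => α * b₁ s + (1 - α) * b₂ s) a z
      = α * obsProb M b₁ a z + (1 - α) * obsProb M b₂ a z := obsProb_mix M b₁ b₂ α a z
  have h1α : (0:ℝ) < 1 - α := by linarith
  rcases hD₁0.eq_or_lt with hD₁ | hD₁
  · rcases hD₂0.eq_or_lt with hD₂ | hD₂
    · -- both zero
      rw [hDmix, ← hD₁, ← hD₂]
      simp
    · -- D₁ = 0 < D₂ : mixed update equals b₂-update
      have hnum1 : ∀ s', numer M b₁ a z s' = 0 := numer_eq_zero M h₁.1.1 hD₁.symm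
      have hupd : beliefUpdate M (fun s => α * b₁ s + (1 - α) * b₂ s) a z
          = beliefUpdate M b₂ a z := by
        funext s'
        rw [beliefUpdate_eq, beliefUpdate_eq, numer_mix, hDmix, hnum1 s', ← hD₁]
        rw [mul_zero, zero_add, zero_add, mul_div_mul_left _ _ h1α.ne']
      rw [hDmix, hupd, ← hD₁]
      apply le_of_eq
      ring
  · rcases hD₂0.eq_or_lt with hD₂ | hD₂
    · -- D₂ = 0 < D₁ : mixed update equals b₁-update
      have hnum2 : ∀ s', numer M b₂ a z s' = 0 := numer_eq_zero M h₂.1.1 hD₂.symm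
      have hupd : beliefUpdate M (fun s => α * b₁ s + (1 - α) * b₂ s) a z
          = beliefUpdate M b₁ a z := by
        funext s'
        rw [beliefUpdate_eq, beliefUpdate_eq, numer_mix, hDmix, hnum2 s', ← hD₂]
        rw [mul_zero, add_zero, add_zero, mul_div_mul_left _ _ hα0.ne']
      rw [hDmix, hupd, ← hD₂]
      apply le_of_eq
      ring
    · -- both positive: genuine convex combination
      have hD0 : 0 < α * obsProb M b₁ a z + (1 - α) * obsProb M b₂ a z :=
        add_pos (mul_pos hα0 hD₁) (mul_pos h1α hD₂)
      set β : ℝ := α * obsProb M b₁ a z /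
        (α * obsProb M b₁ a z + (1 - α) * obsProb M b₂ a z) with hβdef
      have hβ0 : 0 ≤ β := div_nonneg (by positivity) hD0.le
      have hβ1 : β ≤ 1 := by
        rw [hβdef, div_le_one hD0]
        nlinarith
      have h1β : 1 - β = (1 - α) * obsProb M b₂ a z /
          (α * obsProb M b₁ a z + (1 - α) * obsProb M b₂ a z) := by
        rw [hβdef]
        field_simp
        ring
      have hu₁ : IsBelief M (beliefUpdate M b₁ a z) :=
        isBelief_beliefUpdate M h₁.1.1 a z hD₁.ne'
      have hu₂ : IsBelief M (beliefUpdate M b₂ a z) :=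
        isBelief_beliefUpdate M h₂.1.1 a z hD₂.ne'
      have hobs' : ∀ s s', beliefUpdate M b₁ a z s ≠ 0 → beliefUpdate M b₂ a z s' ≠ 0 →
          M.O s = M.O s' := fun s s' hs hs' => by
        rw [beliefUpdate_obs M b₁ a z s hs, beliefUpdate_obs M b₂ a z s' hs']
      have hupd : beliefUpdate M (fun s => α * b₁ s + (1 - α) * b₂ s) a z
          = fun s' => β * beliefUpdate M b₁ a z s' + (1 - β) * beliefUpdate M b₂ a z s' := by
        funext s'
        rw [h1β, hβdef, beliefUpdate_eq, beliefUpdate_eq, beliefUpdate_eq, numer_mix, hDmix]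
        field_simp
      have key := IH _ _ hu₁ hu₂ hobs' β hβ0 hβ1
      rw [← hupd] at key
      rw [hDmix]
      calc (α * obsProb M b₁ a z + (1 - α) * obsProb M b₂ a z) *
            valN M Bad n (beliefUpdate M (fun s => α * b₁ s + (1 - α) * b₂ s) a z)
          ≤ (α * obsProb M b₁ a z + (1 - α) * obsProb M b₂ a z) *
            (β * valN M Bad n (beliefUpdate M b₁ a z)
              + (1 - β) * valN M Bad n (beliefUpdate M b₂ a z)) :=
            mul_le_mul_of_nonneg_left key hD0.le
        _ = α * (obsProb M b₁ a z * valN M Bad n (beliefUpdate M b₁ a z))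
            + (1 - α) * (obsProb M b₂ a z * valN M Bad n (beliefUpdate M b₂ a z)) := by
            rw [h1β, hβdef]
            field_simp

end Aux2
section Aux3

variable {S A Z : Type} [Fintype S] [Fintype A] [Fintype Z]

lemma valN_succ_eq (M : POMDP S A Z) (Bad : Finset S) (n : ℕ) (b : S → ℝ) :
    valN M Bad (n+1) b = if IsBadBelief Bad b then 1
      else ⨆ a : A, ∑ z, obsProb M b a z * valN M Bad n (beliefUpdate M b a z) := rfl

lemma valN_convex (M : POMDP S A Z) (Bad : Finset S) (n : ℕ) :
    ∀ (b₁ b₂ : S → ℝ), IsBelief M b₁ → IsBelief M b₂ →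
      (∀ s s', b₁ s ≠ 0 → b₂ s' ≠ 0 → M.O s = M.O s') →
      ∀ α : ℝ, 0 ≤ α → α ≤ 1 →
      valN M Bad n (fun s => α * b₁ s + (1 - α) * b₂ s)
        ≤ α * valN M Bad n b₁ + (1 - α) * valN M Bad n b₂ := by
  induction n with
  | zero =>
    intro b₁ b₂ h₁ h₂ hobs α hα0 hα1
    rcases hα0.eq_or_lt with h0 | h0
    · have hmix : (fun s => α * b₁ s + (1 - α) * b₂ s) = b₂ := by
        funext s; rw [← h0]; ring
      rw [hmix, ← h0]; norm_num
    rcases hα1.eq_or_lt with h1 | h1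
    · have hmix : (fun s => α * b₁ s + (1 - α) * b₂ s) = b₁ := by
        funext s; rw [h1]; ring
      rw [hmix, h1]; norm_num
    by_cases hbad : IsBadBelief Bad (fun s => α * b₁ s + (1 - α) * b₂ s)
    · obtain ⟨hb1, hb2⟩ := isBadBelief_mix h₁.1 h₂.1 h0 h1 hbad
      unfold valN
      rw [if_pos hbad, if_pos hb1, if_pos hb2]
      linarith
    · unfold valN
      rw [if_neg hbad]
      split_ifs <;> nlinarith
  | succ n ih =>
    intro b₁ b₂ h₁ h₂ hobs α hα0 hα1
    rcases hα0.eq_or_lt with h0 | h0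
    · have hmix : (fun s => α * b₁ s + (1 - α) * b₂ s) = b₂ := by
        funext s; rw [← h0]; ring
      rw [hmix, ← h0]; norm_num
    rcases hα1.eq_or_lt with h1 | h1
    · have hmix : (fun s => α * b₁ s + (1 - α) * b₂ s) = b₁ := by
        funext s; rw [h1]; ring
      rw [hmix, h1]; norm_num
    by_cases hbad : IsBadBelief Bad (fun s => α * b₁ s + (1 - α) * b₂ s)
    · obtain ⟨hb1, hb2⟩ := isBadBelief_mix h₁.1 h₂.1 h0 h1 hbad
      rw [valN_succ_eq, valN_succ_eq, valN_succ_eq, if_pos hbad, if_pos hb1, if_pos hb2]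
      linarith
    · rw [valN_succ_eq M Bad n (fun s => α * b₁ s + (1 - α) * b₂ s), if_neg hbad]
      have hRHS : 0 ≤ α * valN M Bad (n+1) b₁ + (1 - α) * valN M Bad (n+1) b₂ :=
        add_nonneg (mul_nonneg hα0 (valN_nonneg M Bad (n+1) b₁ h₁.1.1))
          (mul_nonneg (by linarith) (valN_nonneg M Bad (n+1) b₂ h₂.1.1))
      refine Real.iSup_le (fun a => ?_) hRHS
      calc (∑ z, obsProb M (fun s => α * b₁ s + (1 - α) * b₂ s) a z *
              valN M Bad n (beliefUpdate M (fun s => α * b₁ s + (1 - α) * b₂ s) a z))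
          ≤ ∑ z, (α * (obsProb M b₁ a z * valN M Bad n (beliefUpdate M b₁ a z))
              + (1 - α) * (obsProb M b₂ a z * valN M Bad n (beliefUpdate M b₂ a z))) :=
            Finset.sum_le_sum fun z _ => step_key M Bad n b₁ b₂ h₁ h₂ ih h0 h1 a z
        _ = α * (∑ z, obsProb M b₁ a z * valN M Bad n (beliefUpdate M b₁ a z))
            + (1 - α) * (∑ z, obsProb M b₂ a z * valN M Bad n (beliefUpdate M b₂ a z)) := by
            rw [Finset.sum_add_distrib, Finset.mul_sum, Finset.mul_sum]
        _ ≤ α * valN M Bad (n+1) b₁ + (1 - α) * valN M Bad (n+1) b₂ :=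
            add_le_add
              (mul_le_mul_of_nonneg_left (inner_le_valN_succ M Bad n h₁.1 a) hα0)
              (mul_le_mul_of_nonneg_left (inner_le_valN_succ M Bad n h₂.1 a) (by linarith))

end Aux3

/-- The value function of the belief MDP of a POMDP is convex:
for beliefs `b₁, b₂` supported on states with the same observation and `α ∈ [0,1]`,
`V(α·b₁ + (1−α)·b₂) ≤ α·V(b₁) + (1−α)·V(b₂)`. -/
theorem beliefVal_convex (M : POMDP S A Z) (Bad : Finset S)
    (b₁ b₂ : S → ℝ) (h₁ : IsBelief M b₁) (h₂ : IsBelief M b₂)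
    (hobs : ∀ s s', b₁ s ≠ 0 → b₂ s' ≠ 0 → M.O s = M.O s')
    (α : ℝ) (hα0 : 0 ≤ α) (hα1 : α ≤ 1) :
    beliefVal M Bad (fun s => α * b₁ s + (1 - α) * b₂ s)
      ≤ α * beliefVal M Bad b₁ + (1 - α) * beliefVal M Bad b₂ := by
  have hnn : ∀ b : S → ℝ, (∀ s, 0 ≤ b s) → 0 ≤ beliefVal M Bad b := fun b hb =>
    Real.iSup_nonneg fun n => valN_nonneg M Bad n b hb
  have hle : ∀ (b : S → ℝ) (n : ℕ), (∀ s, 0 ≤ b s) → (∑ s, b s ≤ 1) →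
      valN M Bad n b ≤ beliefVal M Bad b := by
    intro b n hb0 hb1
    have hbdd : BddAbove (Set.range fun m => valN M Bad m b) :=
      ⟨1, by rintro x ⟨m, rfl⟩; exact valN_le_one M Bad m b hb0 hb1⟩
    exact le_ciSup hbdd n
  unfold beliefVal
  refine Real.iSup_le (fun n => ?_)
    (add_nonneg (mul_nonneg hα0 (Real.iSup_nonneg fun m => valN_nonneg M Bad m b₁ h₁.1.1))
      (mul_nonneg (by linarith) (Real.iSup_nonneg fun m => valN_nonneg M Bad m b₂ h₂.1.1)))
  calc valN M Bad n (fun s => α * b₁ s + (1 - α) * b₂ s)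
      ≤ α * valN M Bad n b₁ + (1 - α) * valN M Bad n b₂ :=
        valN_convex M Bad n b₁ b₂ h₁ h₂ hobs α hα0 hα1
    _ ≤ α * (⨆ m, valN M Bad m b₁) + (1 - α) * (⨆ m, valN M Bad m b₂) :=
        add_le_add
          (mul_le_mul_of_nonneg_left (hle b₁ n h₁.1.1 (le_of_eq h₁.1.2)) hα0)
          (mul_le_mul_of_nonneg_left (hle b₂ n h₂.1.1 (le_of_eq h₂.1.2)) (by linarith))
end

section
/- If the underlying MDP of a POMDP is acyclic except for absorbing sink states (i.e., no state is reachable from itself in one or more steps, except for states with only self-loops), then the set of beliefs reachable in the belief MDP from the initial belief is finite. -/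
open BigOperators
open scoped Classical

variable {S A Z : Type} [Fintype S] [Fintype A] [Fintype Z]

/-- A state is absorbing if every enabled action loops back with probability 1. -/
def Absorbing (M : POMDP S A Z) (s : S) : Prop :=
  ∀ a, (∑ s', M.P s a s') = 1 → M.P s a s = 1

/-- One-step reachability in the underlying MDP. -/
def Step (M : POMDP S A Z) (s s' : S) : Prop := ∃ a, 0 < M.P s a s'


namespace ReachAux

open Relation

variable {S A Z : Type} [Fintype S] [Fintype A] [Fintype Z]

noncomputable def supp (b : S → ℝ) : Finset S := Finset.univ.filter (fun s => b s ≠ 0)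

lemma mem_supp {b : S → ℝ} {s : S} : s ∈ supp b ↔ b s ≠ 0 := by simp [supp]

lemma absorbing_row (M : POMDP S A Z) {s : S} (hs : Absorbing M s) {a : A} {s' : S}
    (h : M.P s a s' ≠ 0) : s' = s ∧ M.P s a s = 1 := by
  rcases M.P_sum s a with h0 | h1
  · exact absurd ((Finset.sum_eq_zero_iff_of_nonneg
      (fun t _ => M.P_nonneg s a t)).mp h0 s' (Finset.mem_univ _)) h
  · have h2 : M.P s a s = 1 := hs a h1
    have herase : ∑ t ∈ Finset.univ.erase s, M.P s a t = 0 := by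
      have := Finset.add_sum_erase Finset.univ (M.P s a) (Finset.mem_univ s)
      linarith
    constructor
    · by_contra hne
      exact h ((Finset.sum_eq_zero_iff_of_nonneg
        (fun t _ => M.P_nonneg s a t)).mp herase s'
        (Finset.mem_erase.mpr ⟨hne, Finset.mem_univ _⟩))
    · exact h2

lemma absorbing_offdiag (M : POMDP S A Z) {s : S} (hs : Absorbing M s) {a : A} {s' : S}
    (hne : s' ≠ s) : M.P s a s' = 0 := by
  by_contra h
  exact hne (absorbing_row M hs h).1

lemma obsProb_eq (M : POMDP S A Z) (b : S → ℝ) (a : A) (z : Z) :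
    obsProb M b a z = ∑ s', if M.O s' = z then ∑ s, b s * M.P s a s' else 0 := by
  unfold obsProb
  simp only [Finset.mul_sum, mul_ite, mul_zero]
  rw [Finset.sum_comm]
  refine Finset.sum_congr rfl fun s' _ => ?_
  split_ifs <;> simp

lemma isDist_update (M : POMDP S A Z) {b : S → ℝ} (hb : IsDist b) {a : A} {z : Z}
    (hz : 0 < obsProb M b a z) : IsDist (beliefUpdate M b a z) := by
  constructor
  · intro s'
    unfold beliefUpdate
    apply div_nonneg _ hz.le
    split_ifs
    · exact Finset.sum_nonneg fun s _ => mul_nonneg (hb.1 s) (M.P_nonneg s a s')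
    · exact le_refl 0
  · unfold beliefUpdate
    rw [← Finset.sum_div, ← obsProb_eq, div_self hz.ne']

lemma update_exists (M : POMDP S A Z) {b : S → ℝ} (hb : ∀ s, 0 ≤ b s) {a : A} {z : Z} {s' : S}
    (h : beliefUpdate M b a z s' ≠ 0) :
    M.O s' = z ∧ ∃ s, b s ≠ 0 ∧ 0 < M.P s a s' := by
  unfold beliefUpdate at h
  have hnum : (if M.O s' = z then ∑ s, b s * M.P s a s' else 0) ≠ 0 := by
    intro hh; rw [hh] at h; simp at h
  split_ifs at hnum with hO
  · refine ⟨hO, ?_⟩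
    obtain ⟨s, _, hs⟩ := Finset.exists_ne_zero_of_sum_ne_zero hnum
    refine ⟨s, fun h0 => hs (by simp [h0]), ?_⟩
    rcases lt_or_eq_of_le (M.P_nonneg s a s') with hlt | heq
    · exact hlt
    · exact absurd (by rw [← heq]; ring) hs
  · exact absurd rfl hnum

lemma trans_exists (M : POMDP S A Z) {b b' : S → ℝ} {a : A}
    (h : 0 < beliefTrans M b a b') :
    ∃ z, 0 < obsProb M b a z ∧ b' = beliefUpdate M b a z := by
  unfold beliefTrans at h
  obtain ⟨z, _, hz⟩ := Finset.exists_ne_zero_of_sum_ne_zero h.ne'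
  split_ifs at hz with hc
  · exact ⟨z, hc.2, hc.1⟩
  · exact absurd rfl hz

def RStep (M : POMDP S A Z) (s t : S) : Prop :=
  Step M s t ∧ ¬ Absorbing M s ∧ ¬ Absorbing M t

noncomputable def rank (M : POMDP S A Z) (s : S) : ℕ :=
  (Finset.univ.filter (fun t => Relation.ReflTransGen (RStep M) s t)).card

lemma rank_lt (M : POMDP S A Z)
    (hacyclic : ∀ s, ¬ Absorbing M s → ¬ Relation.TransGen (Step M) s s)
    {s s' : S} (h : Step M s s') (hs : ¬ Absorbing M s) (hs' : ¬ Absorbing M s') :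
    rank M s' < rank M s := by
  have hr : RStep M s s' := ⟨h, hs, hs'⟩
  have hsub : (Finset.univ.filter (fun t => Relation.ReflTransGen (RStep M) s' t)) ⊆
      (Finset.univ.filter (fun t => Relation.ReflTransGen (RStep M) s t)) := by
    intro t ht
    simp only [Finset.mem_filter, Finset.mem_univ, true_and] at *
    exact Relation.ReflTransGen.head hr ht
  apply Finset.card_lt_card
  rw [Finset.ssubset_iff_of_subset hsub]
  refine ⟨s, by simp [Relation.ReflTransGen.refl], ?_⟩
  simp only [Finset.mem_filter, Finset.mem_univ, true_and]
  intro hrt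
  exact hacyclic s hs (Relation.TransGen.mono (r := RStep M) (p := Step M) (fun _ _ hxy => hxy.1) s s
    (Relation.TransGen.head' hr hrt))

noncomputable def mrank (M : POMDP S A Z) (b : S → ℝ) : ℕ :=
  (supp b).sup fun s => if Absorbing M s then 0 else rank M s + 1

noncomputable def mu (M : POMDP S A Z) (b : S → ℝ) : ℕ :=
  (Fintype.card S + 1) * mrank M b + (supp b).card

lemma mu_lt (M : POMDP S A Z)
    (hacyclic : ∀ s, ¬ Absorbing M s → ¬ Relation.TransGen (Step M) s s)
    {b : S → ℝ} (hb : IsDist b) {a : A} {z : Z}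
    (hz : 0 < obsProb M b a z) (hne : beliefUpdate M b a z ≠ b) :
    mu M (beliefUpdate M b a z) < mu M b := by
  set b' := beliefUpdate M b a z with hb'def
  by_cases hNA : ∃ s ∈ supp b, ¬ Absorbing M s
  · -- some non-absorbing state in the support: mrank strictly decreases
    obtain ⟨s0, hs0, hs0na⟩ := hNA
    have h1 : 1 ≤ mrank M b := by
      have h3 := Finset.le_sup (f := fun s => if Absorbing M s then 0 else rank M s + 1) hs0
      simp only [hs0na, if_false] at h3
      unfold mrank
      omega
    have h2 : mrank M b' + 1 ≤ mrank M b := by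
      have : mrank M b' ≤ mrank M b - 1 := by
        apply Finset.sup_le
        intro s' hs'
        split_ifs with habs
        · omega
        · obtain ⟨hO, s, hbs, hP⟩ := update_exists M hb.1 (mem_supp.mp hs')
          have hsna : ¬ Absorbing M s := by
            intro habs2
            exact habs (by rw [(absorbing_row M habs2 hP.ne').1]; exact habs2)
          have hrlt := rank_lt M hacyclic ⟨a, hP⟩ hsna habs
          have hle : rank M s + 1 ≤ mrank M b := by
            have h3 := Finset.le_sup (f := fun s => if Absorbing M s then 0 else rank M s + 1)
              (mem_supp.mpr hbs)
            simp only [hsna, if_false] at h3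
            exact h3
          omega
      omega
    have hcard : (supp b').card ≤ Fintype.card S := Finset.card_le_univ _
    have hcard0 : 0 < (supp b).card := by
      exact Finset.card_pos.mpr ⟨s0, hs0⟩
    calc mu M b' = (Fintype.card S + 1) * mrank M b' + (supp b').card := rfl
      _ < (Fintype.card S + 1) * mrank M b' + (Fintype.card S + 1) := by omega
      _ = (Fintype.card S + 1) * (mrank M b' + 1) := by ring
      _ ≤ (Fintype.card S + 1) * mrank M b := Nat.mul_le_mul_left _ h2
      _ ≤ mu M b := Nat.le_add_right _ _
  · -- all support states absorbing: support strictly shrinks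
    push_neg at hNA
    have habs : ∀ s ∈ supp b, Absorbing M s := hNA
    have hsub : supp b' ⊆ supp b := by
      intro s' hs'
      obtain ⟨hO, s, hbs, hP⟩ := update_exists M hb.1 (mem_supp.mp hs')
      have := (absorbing_row M (habs s (mem_supp.mpr hbs)) hP.ne').1
      rw [this]
      exact mem_supp.mpr hbs
    have hmr : mrank M b = 0 := by
      refine Nat.le_zero.mp (Finset.sup_le fun s hs => ?_)
      simp [habs s hs]
    have hmr' : mrank M b' = 0 := by
      refine Nat.le_zero.mp (Finset.sup_le fun s hs => ?_)
      simp [habs s (hsub hs)]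
    -- show supp b' ≠ supp b
    have hssne : supp b' ≠ supp b := by
      intro hsupp
      apply hne
      -- key computations
      have hkey : ∀ s ∈ supp b, M.O s = z ∧ M.P s a s = 1 := by
        intro s hs
        have hs' : s ∈ supp b' := hsupp ▸ hs
        obtain ⟨hO, -⟩ := update_exists M hb.1 (mem_supp.mp hs')
        refine ⟨hO, ?_⟩
        have hnum : (if M.O s = z then ∑ t, b t * M.P t a s else 0) ≠ 0 := by
          intro hh
          apply mem_supp.mp hs'
          show beliefUpdate M b a z s = 0
          unfold beliefUpdate
          rw [hh]; simp
        rw [if_pos hO] at hnum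
        have hsingle : ∑ t, b t * M.P t a s = b s * M.P s a s := by
          apply Finset.sum_eq_single
          · intro t _ htne
            by_cases hbt : b t = 0
            · simp [hbt]
            · have : M.P t a s = 0 := by
                by_contra hP0
                exact htne ((absorbing_row M (habs t (mem_supp.mpr hbt)) hP0).1 ▸
                  (absorbing_row M (habs t (mem_supp.mpr hbt)) hP0).1)
              simp [this]
          · intro hsn; exact absurd (Finset.mem_univ s) hsn
        rw [hsingle] at hnum
        have hP0 : M.P s a s ≠ 0 := fun hh => hnum (by rw [hh]; ring)
        exact (absorbing_row M (habs s hs) hP0).2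
      have hQ : obsProb M b a z = 1 := by
        unfold obsProb
        have hterm : ∀ s, b s * (∑ s', if M.O s' = z then M.P s a s' else 0) = b s := by
          intro s
          by_cases hbs : b s = 0
          · simp [hbs]
          · have hs := mem_supp.mpr hbs
            obtain ⟨hO, hP1⟩ := hkey s hs
            have hinner : (∑ s', if M.O s' = z then M.P s a s' else 0) = 1 := by
              rw [Finset.sum_eq_single s]
              · rw [if_pos hO, hP1]
              · intro t _ htne
                rw [absorbing_offdiag M (habs s hs) htne]
                simp
              · intro hsn; exact absurd (Finset.mem_univ s) hsn
            rw [hinner, mul_one]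
        calc (∑ s, b s * ∑ s', if M.O s' = z then M.P s a s' else 0)
            = ∑ s, b s := Finset.sum_congr rfl fun s _ => hterm s
          _ = 1 := hb.2
      funext s
      show beliefUpdate M b a z s = b s
      unfold beliefUpdate
      rw [hQ, div_one]
      by_cases hbs : b s = 0
      · have hs' : s ∉ supp b' := by rw [hsupp]; simp [supp, hbs]
        have : beliefUpdate M b a z s = 0 := not_not.mp (fun hh => hs' (mem_supp.mpr hh))
        unfold beliefUpdate at this
        rw [hQ, div_one] at this
        rw [this, hbs]
      · have hs := mem_supp.mpr hbs
        obtain ⟨hO, hP1⟩ := hkey s hs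
        rw [if_pos hO]
        rw [Finset.sum_eq_single s]
        · rw [hP1, mul_one]
        · intro t _ htne
          by_cases hbt : b t = 0
          · simp [hbt]
          · rw [absorbing_offdiag M (habs t (mem_supp.mpr hbt)) (by exact fun hh => htne (hh ▸ rfl))]
            simp
        · intro hsn; exact absurd (Finset.mem_univ s) hsn
    have hcard : (supp b').card < (supp b).card :=
      Finset.card_lt_card (lt_of_le_of_ne hsub hssne)
    simp only [mu, hmr, hmr']
    omega

lemma reach_cases {α : Type*} (r : α → α → Prop) {b c : α} (h : Relation.ReflTransGen r b c) :
    c = b ∨ ∃ b', r b b' ∧ b' ≠ b ∧ Relation.ReflTransGen r b' c := by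
  induction h with
  | refl => exact Or.inl rfl
  | @tail c d _ hcd ih =>
    rcases ih with heq | ⟨b', hr, hne, hreach⟩
    · subst heq
      by_cases hd : d = c
      · exact Or.inl hd
      · exact Or.inr ⟨d, hcd, hd, Relation.ReflTransGen.refl⟩
    · exact Or.inr ⟨b', hr, hne, hreach.tail hcd⟩

lemma reach_finite_aux (M : POMDP S A Z)
    (hacyclic : ∀ s, ¬ Absorbing M s → ¬ Relation.TransGen (Step M) s s) :
    ∀ n (b : S → ℝ), IsDist b → mu M b ≤ n →
      {b' : S → ℝ |
        Relation.ReflTransGen (fun x y => ∃ a, 0 < beliefTrans M x a y) b b'}.Finite := by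
  intro n
  induction n with
  | zero =>
    intro b hb hmu
    exfalso
    have hex : ∃ s, b s ≠ 0 := by
      by_contra hall
      push_neg at hall
      have := hb.2
      simp [hall] at this
    obtain ⟨s, hs⟩ := hex
    have h1 : 1 ≤ (supp b).card := Finset.card_pos.mpr ⟨s, mem_supp.mpr hs⟩
    have : 1 ≤ mu M b := le_trans h1 (Nat.le_add_left _ _)
    omega
  | succ n ih =>
    intro b hb hmu
    set r := fun x y : S → ℝ => ∃ a, 0 < beliefTrans M x a y with hr_def
    have key : ∀ b', r b b' → b' ≠ b → IsDist b' ∧ mu M b' ≤ n := by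
      rintro b' ⟨a, ha⟩ hne
      obtain ⟨z, hz, heq⟩ := trans_exists M ha
      subst heq
      refine ⟨isDist_update M hb hz, ?_⟩
      have := mu_lt M hacyclic hb hz hne
      omega
    have hsucc_fin : {b' | r b b' ∧ b' ≠ b}.Finite := by
      apply Set.Finite.subset (Set.finite_range (fun p : A × Z => beliefUpdate M b p.1 p.2))
      rintro b' ⟨⟨a, ha⟩, -⟩
      obtain ⟨z, _, heq⟩ := trans_exists M ha
      exact ⟨(a, z), heq.symm⟩
    have hT : ({b} ∪ ⋃ b' ∈ {b' | r b b' ∧ b' ≠ b},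
        {c | Relation.ReflTransGen r b' c} : Set (S → ℝ)).Finite := by
      apply Set.Finite.union (Set.finite_singleton b)
      exact Set.Finite.biUnion hsucc_fin
        (fun b' hb' => ih b' (key b' hb'.1 hb'.2).1 (key b' hb'.1 hb'.2).2)
    apply hT.subset
    intro c hc
    rcases reach_cases r hc with heq | ⟨b', hr, hne, hreach⟩
    · exact Or.inl heq
    · exact Or.inr (Set.mem_biUnion (⟨hr, hne⟩ : b' ∈ {b' | r b b' ∧ b' ≠ b}) hreach)

end ReachAux

/-- if the underlying MDP is acyclic except for absorbing sink states
(no non-absorbing state is reachable from itself in one or more steps), then the set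
of beliefs reachable in the belief MDP from the initial belief is finite. -/
theorem reach_finite_of_acyclic (M : POMDP S A Z)
    (hacyclic : ∀ s, ¬ Absorbing M s → ¬ Relation.TransGen (Step M) s s) :
    {b' : S → ℝ |
      Relation.ReflTransGen (fun x y => ∃ a, 0 < beliefTrans M x a y)
        (dirac M.init) b'}.Finite := by
  have hd : IsDist (dirac M.init : S → ℝ) := by
    constructor
    · intro s; unfold dirac; split_ifs <;> norm_num
    · simp [dirac]
  exact ReachAux.reach_finite_aux M hacyclic (ReachAux.mu M (dirac M.init)) _ hd le_rfl
end
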